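/- For every integer C ≥ 2 there exists an integer N such that for all n ≥ N the following holds: there is no tuple (Σ, φ, τ, a, d) where Σ is a finite alphabet with |Σ| ≤ C, φ is an expanding morphism over Σ with 2 ≤ |φ(x)| ≤ C for every symbol x, τ : Σ → {0,1} is a coding, a ∈ Σ is a symbol, and d ≥ 0 is an integer, such that the string 0^n·1·0^{2^n} (n zeros, a one, then 2^n zeros) is a prefix of τ(φ^d(a)). In other words, no family of expanding coded morphisms of bounded size can generate all strings 0^n 1 0^{2^n}. -/

import Mathlib

namespace Stmt14

variable {α : Type}

def Dd (f : α → List α) (h : ℕ) (x : α) : List α := (fun l => l.flatMap f)^[h] [x]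

lemma iter_eq (f : α → List α) : ∀ (h : ℕ) (l : List α),
    (fun l => l.flatMap f)^[h] l = l.flatMap (fun x => Dd f h x) := by
  intro h
  induction h with
  | zero => intro l; simp [Dd]
  | succ h ih =>
    intro l
    rw [Function.iterate_succ_apply]
    show (fun l => l.flatMap f)^[h] (l.flatMap f) = _
    rw [ih, List.flatMap_assoc]
    congr 1
    funext x
    show _ = (fun l => l.flatMap f)^[h+1] [x]
    rw [Function.iterate_succ_apply, ih]
    simp [Dd]

lemma Dd_zero (f : α → List α) (x : α) : Dd f 0 x = [x] := rfl

lemma Dd_succ (f : α → List α) (h : ℕ) (x : α) :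
    Dd f (h + 1) x = (f x).flatMap (fun y => Dd f h y) := by
  show (fun l => l.flatMap f)^[h+1] [x] = _
  rw [Function.iterate_succ_apply]
  show (fun l => l.flatMap f)^[h] (List.flatMap f [x]) = _
  rw [iter_eq]
  simp

lemma len_lb (f : α → List α) (hf : ∀ x, 2 ≤ (f x).length) :
    ∀ (h : ℕ) (x : α), 2 ^ h ≤ (Dd f h x).length := by
  intro h
  induction h with
  | zero => intro x; simp [Dd_zero]
  | succ h ih =>
    intro x
    rw [Dd_succ, List.length_flatMap]
    have h1 : (f x).length • (2^h) ≤ (List.map (List.length ∘ (fun y => Dd f h y)) (f x)).sum := by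
      have := List.card_nsmul_le_sum (List.map (List.length ∘ (fun y => Dd f h y)) (f x)) (2^h)
        (by intro v hv; simp at hv; obtain ⟨y, _, rfl⟩ := hv; exact ih y)
      simpa using this
    calc 2 ^ (h+1) = 2 * 2 ^ h := by ring
    _ ≤ (f x).length * 2 ^ h := Nat.mul_le_mul_right _ (hf x)
    _ ≤ _ := by simpa [smul_eq_mul, Function.comp_def] using h1

lemma len_ub (f : α → List α) (C : ℕ) (hC : 1 ≤ C) (hf : ∀ x, (f x).length ≤ C) :
    ∀ (h : ℕ) (x : α), (Dd f h x).length ≤ C ^ h := by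
  intro h
  induction h with
  | zero => intro x; simp [Dd_zero]
  | succ h ih =>
    intro x
    rw [Dd_succ, List.length_flatMap]
    have h1 : (List.map (List.length ∘ (fun y => Dd f h y)) (f x)).sum
        ≤ (List.map (List.length ∘ (fun y => Dd f h y)) (f x)).length • (C^h) := by
      refine List.sum_le_card_nsmul _ _ ?_
      intro v hv; simp at hv; obtain ⟨y, _, rfl⟩ := hv; exact ih y
    calc _ ≤ (List.map (List.length ∘ (fun y => Dd f h y)) (f x)).length • (C^h) := h1
    _ = (f x).length * C ^ h := by simp [smul_eq_mul]
    _ ≤ C * C ^ h := Nat.mul_le_mul_right _ (hf x)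
    _ = C ^ (h+1) := by ring

/-- has-a-true indicator at height h -/
def ztf (f : α → List α) (τ : α → Bool) (h : ℕ) : α → Bool := fun x => (Dd f h x).any τ

lemma ztf_succ (f : α → List α) (τ : α → Bool) (h : ℕ) :
    ztf f τ (h + 1) = fun x => (f x).any (ztf f τ h) := by
  funext x
  simp only [ztf, Dd_succ]
  induction f x with
  | nil => simp
  | cons y l ih => simp [List.any_append, ih, ztf]

def pX (f : α → List α) (τ : α → Bool) (a : α) (d : ℕ) : ℕ → α
  | 0 => a
  | j + 1 => (((f (pX f τ a d j)).dropWhile (fun z => !ztf f τ (d - 1 - j) z)).headD a)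

def oX (f : α → List α) (τ : α → Bool) (a : α) (d : ℕ) (j : ℕ) : ℕ :=
  (((f (pX f τ a d j)).takeWhile (fun z => !ztf f τ (d - 1 - j) z)).map
    (fun y => (Dd f (d - 1 - j) y).length)).sum

end Stmt14

namespace Stmt14
variable {α : Type}

lemma pX_succ (f : α → List α) (τ : α → Bool) (a : α) (d j : ℕ) :
    pX f τ a d (j+1) = (((f (pX f τ a d j)).dropWhile (fun z => !ztf f τ (d - 1 - j) z)).headD a) := rfl

lemma descent (f : α → List α) (τ : α → Bool) (a : α) (d : ℕ) (n : ℕ)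
    (h0 : (List.replicate n false ++ [true]) <+: (Dd f d a).map τ) :
    ∀ j, j ≤ d → (∑ i ∈ Finset.range j, oX f τ a d i) ≤ n ∧
      (List.replicate (n - ∑ i ∈ Finset.range j, oX f τ a d i) false ++ [true]) <+:
        (Dd f (d - j) (pX f τ a d j)).map τ := by
  intro j
  induction j with
  | zero =>
    intro _
    refine ⟨Nat.zero_le n, ?_⟩
    simpa [pX] using h0
  | succ j ih =>
    intro hj
    obtain ⟨hS, hpr⟩ := ih (Nat.le_of_succ_le hj)
    set g := d - 1 - j with hgdef
    have hdj : d - j = g + 1 := by omega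
    set t := pX f τ a d j with ht
    set k := n - ∑ i ∈ Finset.range j, oX f τ a d i with hk
    rw [hdj, Dd_succ] at hpr
    set pred := (fun z => !ztf f τ g z) with hpred
    set pre := (f t).takeWhile pred with hpre
    set drop := (f t).dropWhile pred with hdrop
    set A := (pre.flatMap fun y => (Dd f g y).map τ) with hA
    set B := (drop.flatMap fun y => (Dd f g y).map τ) with hB
    clear_value g t k pred pre drop A B
    have hsplit : f t = pre ++ drop := by
      rw [hpre, hdrop]; exact (List.takeWhile_append_dropWhile (p := pred) (l := f t)).symm
    have hmap : ((f t).flatMap fun y => Dd f g y).map τ = A ++ B := by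
      rw [hA, hB, List.map_flatMap, hsplit, List.flatMap_append]
    rw [hmap] at hpr
    have hAfalse : ∀ b ∈ A, b = false := by
      intro b hb
      rw [hA, List.mem_flatMap] at hb
      obtain ⟨y, hy, hb⟩ := hb
      rw [hpre] at hy
      have hyz : pred y = true := List.mem_takeWhile_imp hy
      rw [hpred] at hyz
      simp only [Bool.not_eq_true'] at hyz
      have hany : (Dd f g y).any τ = false := hyz
      rw [List.mem_map] at hb
      obtain ⟨z, hz, rfl⟩ := hb
      rw [List.any_eq_false] at hany
      simpa using hany z hz
    have hAeq : A = List.replicate A.length false := by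
      refine List.eq_replicate_length.mpr hAfalse
    have hAlen : A.length = oX f τ a d j := by
      rw [hA, List.length_flatMap, oX, ← hgdef, ← ht, ← hpred, ← hpre]
      congr 1
      simp [Function.comp]
    -- oX j ≤ k
    have hok : A.length ≤ k := by
      by_contra hlt
      push_neg at hlt
      have h1 := hpr.getElem (i := k) (by simp)
      have h2 : (List.replicate k false ++ [true])[k]'(by simp) = true := by
        rw [List.getElem_append_right (by simp)]
        simp
      have h3 : (A ++ B)[k]'(by rw [List.length_append]; omega) = A[k]'hlt :=
        List.getElem_append_left hlt
      have h4 : A[k]'hlt = false := hAfalse _ (List.getElem_mem _)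
      rw [h2, h3, h4] at h1
      exact absurd h1 (by simp)
    have hstrip : List.replicate k false ++ [true]
        = A ++ (List.replicate (k - A.length) false ++ [true]) := by
      have hkk : k = A.length + (k - A.length) := by omega
      calc List.replicate k false ++ [true]
          = (List.replicate A.length false ++ List.replicate (k - A.length) false) ++ [true] := by
            rw [← List.replicate_add, ← hkk]
        _ = A ++ (List.replicate (k - A.length) false ++ [true]) := by
            rw [← hAeq, List.append_assoc]
    rw [hstrip, List.prefix_append_right_inj] at hpr
    set k' := k - A.length with hk'
    have hdne : drop ≠ [] := by
      intro hnil
      rw [hB, hnil] at hpr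
      simp at hpr
    obtain ⟨z, suf, hzs⟩ := List.exists_cons_of_ne_nil hdne
    have hdz : (f (pX f τ a d j)).dropWhile (fun z => !ztf f τ (d - 1 - j) z) = z :: suf := by
      rw [← ht, ← hgdef, ← hpred, ← hdrop]; exact hzs
    have hzX : pX f τ a d (j+1) = z := by
      rw [pX_succ, hdz]
      rfl
    have hpz : pred z = false := by
      have hne : List.dropWhile pred (f t) ≠ [] := by rw [← hdrop, hzs]; simp
      have hh := List.head_dropWhile_not pred (l := f t) hne
      have hhz : (List.dropWhile pred (f t)).head hne = z := by
        have h5 : List.dropWhile pred (f t) = z :: suf := by rw [← hdrop]; exact hzs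
        simp [h5]
      rwa [hhz] at hh
    have hztrue : (Dd f g z).any τ = true := by
      have : ztf f τ g z = true := by
        have := hpz
        rw [hpred] at this
        simpa using this
      exact this
    have hBeq : B = (Dd f g z).map τ ++ (suf.flatMap fun y => (Dd f g y).map τ) := by
      rw [hB, hzs, List.flatMap_cons]
    have hk'lt : k' < (Dd f g z).length := by
      by_contra hge
      push_neg at hge
      obtain ⟨x, hx, hτ⟩ := List.any_eq_true.mp hztrue
      obtain ⟨i, hi, rfl⟩ := List.mem_iff_getElem.mp hx
      have hik : i < k' := lt_of_lt_of_le hi hge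
      have hiB : i < B.length := by
        rw [hBeq, List.length_append, List.length_map]; omega
      have h1 : B[i]'hiB = true := by
        simp only [hBeq]
        rw [List.getElem_append_left (by rw [List.length_map]; exact hi)]
        simpa using hτ
      have h2 := hpr.getElem (i := i) (by simp; omega)
      have h3 : (List.replicate k' false ++ [true])[i]'(by simp; omega) = false := by
        rw [List.getElem_append_left (by simpa using hik)]
        simp
      rw [h3, h1] at h2
      exact absurd h2 (by simp)
    have hloc : (List.replicate k' false ++ [true]) <+: (Dd f g z).map τ := by
      have hlen2 : (List.replicate k' false ++ [true]).length ≤ ((Dd f g z).map τ).length := by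
        simp; omega
      have heq := List.prefix_iff_eq_take.mp hpr
      rw [hBeq, List.take_append_of_le_length (by simpa using hlen2)] at heq
      exact List.prefix_iff_eq_take.mpr heq
    have hsum : (∑ i ∈ Finset.range (j+1), oX f τ a d i)
        = (∑ i ∈ Finset.range j, oX f τ a d i) + oX f τ a d j := Finset.sum_range_succ _ _
    constructor
    · omega
    · have hnum : n - ∑ i ∈ Finset.range (j+1), oX f τ a d i = k' := by omega
      have hht : d - (j+1) = g := by omega
      rw [hnum, hht, hzX]
      exact hloc

end Stmt14

namespace Stmt14
variable {α : Type}

lemma sum_oX_eq (f : α → List α) (τ : α → Bool) (a : α) (d n : ℕ)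
    (h0 : (List.replicate n false ++ [true]) <+: (Dd f d a).map τ) :
    ∑ i ∈ Finset.range d, oX f τ a d i = n := by
  obtain ⟨hS, hpr⟩ := descent f τ a d n h0 d le_rfl
  rw [Nat.sub_self, Dd_zero] at hpr
  have hlen := hpr.length_le
  simp at hlen
  omega

lemma oX_zero_iff (f : α → List α) (τ : α → Bool) (a : α) (d : ℕ)
    (hf2 : ∀ x, 2 ≤ (f x).length) (j : ℕ) :
    oX f τ a d j = 0 ↔ (f (pX f τ a d j)).takeWhile (fun z => !ztf f τ (d-1-j) z) = [] := by
  rw [oX]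
  constructor
  · intro h
    cases htw : (f (pX f τ a d j)).takeWhile (fun z => !ztf f τ (d-1-j) z) with
    | nil => rfl
    | cons y l =>
      exfalso
      rw [htw, List.map_cons, List.sum_cons] at h
      have h1 := len_lb f hf2 (d-1-j) y
      have h2 : (1:ℕ) ≤ 2^(d-1-j) := Nat.one_le_two_pow
      omega
  · intro h; rw [h]; simp

lemma oX_lb (f : α → List α) (τ : α → Bool) (a : α) (d : ℕ)
    (hf2 : ∀ x, 2 ≤ (f x).length) (j : ℕ) (hne : oX f τ a d j ≠ 0) :
    2^(d-1-j) ≤ oX f τ a d j := by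
  cases htw : (f (pX f τ a d j)).takeWhile (fun z => !ztf f τ (d-1-j) z) with
  | nil => exact absurd ((oX_zero_iff f τ a d hf2 j).mpr htw) hne
  | cons y l =>
    rw [oX, htw, List.map_cons, List.sum_cons]
    exact le_trans (len_lb f hf2 _ y) (Nat.le_add_right _ _)

lemma oX_ub (f : α → List α) (τ : α → Bool) (a : α) (d C : ℕ) (hC1 : 1 ≤ C)
    (hfC : ∀ x, (f x).length ≤ C) (j : ℕ) (hj : j < d) :
    oX f τ a d j ≤ C ^ (d - j) := by
  rw [oX]
  have hb := List.sum_le_card_nsmul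
    (((f (pX f τ a d j)).takeWhile (fun z => !ztf f τ (d-1-j) z)).map
      (fun y => (Dd f (d-1-j) y).length)) (C^(d-1-j)) ?_
  · have hlen : (((f (pX f τ a d j)).takeWhile (fun z => !ztf f τ (d-1-j) z)).map
        (fun y => (Dd f (d-1-j) y).length)).length ≤ C := by
      rw [List.length_map]
      exact le_trans (List.takeWhile_prefix _).length_le (hfC _)
    have : (((f (pX f τ a d j)).takeWhile (fun z => !ztf f τ (d-1-j) z)).map
        (fun y => (Dd f (d-1-j) y).length)).length • (C^(d-1-j)) ≤ C * C^(d-1-j) := by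
      rw [smul_eq_mul]
      exact Nat.mul_le_mul_right _ hlen
    refine le_trans (le_trans hb this) ?_
    rw [← pow_succ']
    exact Nat.pow_le_pow_right hC1 (by omega)
  · intro v hv
    rw [List.mem_map] at hv
    obtain ⟨y, _, rfl⟩ := hv
    exact len_ub f C hC1 hfC _ y

lemma sum_shift (F : ℕ → ℕ) (m k : ℕ) :
    (∑ i ∈ Finset.range (m+k), F i)
      = (∑ i ∈ Finset.range m, F i) + ∑ i ∈ Finset.range k, F (m+i) := by
  induction k with
  | zero => simp
  | succ k ih =>
    rw [← Nat.add_assoc, Finset.sum_range_succ, ih, Finset.sum_range_succ]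
    omega

lemma ztf_per (f : α → List α) (τ : α → Bool) (B0 P : ℕ)
    (hP : ztf f τ B0 = ztf f τ (B0 + P)) :
    ∀ g, B0 ≤ g → ztf f τ g = ztf f τ (g + P) := by
  intro g hg
  refine Nat.le_induction hP ?_ g hg
  intro m _ ih
  have e : m + 1 + P = (m + P) + 1 := by omega
  rw [e, ztf_succ, ztf_succ, ih]

lemma ztf_per_mul (f : α → List α) (τ : α → Bool) (B0 P : ℕ)
    (hP : ztf f τ B0 = ztf f τ (B0 + P)) :
    ∀ t g, B0 ≤ g → ztf f τ g = ztf f τ (g + t * P) := by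
  intro t
  induction t with
  | zero => intro g _; simp
  | succ t ih =>
    intro g hg
    have e : g + (t+1) * P = (g + t * P) + P := by ring
    rw [e, ← ztf_per f τ B0 P hP _ (le_trans hg (Nat.le_add_right _ _)), ih g hg]

lemma two_pow_big (C B : ℕ) (hC : 1 ≤ C) (hB : 1 ≤ B) :
    ∀ u, 2*C + 2*B + 12 ≤ u → C*(u+B) < 2^u := by
  intro u hu
  refine Nat.le_induction ?_ ?_ u hu
  · have hx : C < 2^C := Nat.lt_two_pow_self (n := C)
    have hy : B < 2^B := Nat.lt_two_pow_self (n := B)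
    have h2 : (2:ℕ)^(2*C+2*B+12) = 4096 * ((2^C)*(2^C)) * ((2^B)*(2^B)) := by
      rw [pow_add, pow_add, two_mul, two_mul, pow_add, pow_add]
      ring
    rw [h2]
    have h1 : (1:ℕ) ≤ 2^C := Nat.one_le_two_pow
    have h1' : (1:ℕ) ≤ 2^B := Nat.one_le_two_pow
    calc C*(2*C+2*B+12+B)
        ≤ (2^C)*(2*(2^C)+3*(2^B)+12) := Nat.mul_le_mul hx.le (by linarith)
      _ ≤ (2^C)*(17*((2^C)*(2^B))) := Nat.mul_le_mul_left _ (by nlinarith [h1, h1'])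
      _ < 4096 * ((2^C)*(2^C)) * ((2^B)*(2^B)) := by
          have ht : (1:ℕ) ≤ (2^C)*(2^C)*(2^B) := by
            simpa using Nat.mul_le_mul (Nat.mul_le_mul h1 h1) h1'
          have ht2 : (2^C)*(2^C)*(2^B) ≤ (2^C)*(2^C)*(2^B) * (2^B) :=
            Nat.le_mul_of_pos_right _ (by positivity)
          nlinarith [ht, ht2]
  · intro u hu ih
    have hCu : C < 2^u := lt_of_lt_of_le (Nat.lt_two_pow_self (n := C)) (Nat.pow_le_pow_right two_pos (by omega))
    calc C*(u+1+B) = C*(u+B) + C := by ring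
    _ < 2^u + 2^u := Nat.add_lt_add ih hCu
    _ = 2^(u+1) := by ring

end Stmt14

open Stmt14 in
theorem stmt14 (C : ℕ) (hC : 2 ≤ C) :
    ∃ N : ℕ, ∀ n : ℕ, N ≤ n →
      ¬ ∃ (α : Type) (_ : Fintype α) (f : α → List α) (τ : α → Bool) (a : α)
          (d : ℕ),
        Fintype.card α ≤ C ∧ (∀ x : α, 2 ≤ (f x).length ∧ (f x).length ≤ C) ∧
        (List.replicate n false ++ [true] ++ List.replicate (2 ^ n) false) <+:
          ((fun l => l.flatMap f)^[d] [a]).map τ := by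
  classical
  refine ⟨C*(2*C + 3*(C*2^C) + 12) + 2^C * C^(2^C) + C*(2^C + C*2^C + 2) + 1, ?_⟩
  rintro n hn ⟨α, inst, f, τ, a, d, hcard, hlen2, hpre⟩
  letI := inst
  letI : DecidableEq α := Classical.decEq α
  obtain ⟨Z, hZeq⟩ : ∃ z, z = 2^C := ⟨_, rfl⟩
  rw [← hZeq] at hn
  have hZpos : 0 < Z := by rw [hZeq]; positivity
  have hf2 : ∀ x, 2 ≤ (f x).length := fun x => (hlen2 x).1
  have hfC : ∀ x, (f x).length ≤ C := fun x => (hlen2 x).2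
  have hC1 : 1 ≤ C := by omega
  have hpre' : (List.replicate n false ++ [true] ++ List.replicate (2^n) false)
      <+: (Dd f d a).map τ := hpre
  have h0 : (List.replicate n false ++ [true]) <+: (Dd f d a).map τ :=
    (List.prefix_append _ _).trans hpre'
  have hsum := sum_oX_eq f τ a d n h0
  -- length facts
  have hwlb : n + 1 + 2^n ≤ (Dd f d a).length := by
    have h := hpre'.length_le
    simp at h
    omega
  have hwub : (Dd f d a).length ≤ C ^ d := len_ub f C hC1 hfC d a
  have hnCd : n ≤ C * d := by
    have h1 : (C:ℕ)^d ≤ (2^C)^d := Nat.pow_le_pow_left (Nat.lt_two_pow_self (n := C)).le d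
    have h2 : (2:ℕ)^n ≤ 2^(C*d) := by
      rw [pow_mul]
      omega
    exact (Nat.pow_le_pow_iff_right one_lt_two).mp h2
  -- ztf pigeonhole
  have hcard1 : Fintype.card (α → Bool) < Fintype.card (Fin (Z+1)) := by
    rw [Fintype.card_fun, Fintype.card_fin, Fintype.card_bool, hZeq]
    have := Nat.pow_le_pow_right (show 1 ≤ 2 by norm_num) hcard
    omega
  obtain ⟨i1, i2, hine, hieq⟩ :=
    Fintype.exists_ne_map_eq_of_card_lt (fun i : Fin (Z+1) => ztf f τ i.val) hcard1
  have hivne : i1.val ≠ i2.val := fun hh => hine (Fin.ext hh)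
  obtain ⟨B0, P, hP1, hB0P, hzeq⟩ :
      ∃ b p, 1 ≤ p ∧ b + p ≤ Z ∧ ztf f τ b = ztf f τ (b + p) := by
    rcases Nat.lt_or_ge i1.val i2.val with h | h
    · refine ⟨i1.val, i2.val - i1.val, by omega, ?_, ?_⟩
      · have := i2.isLt; omega
      · rw [show (i1.val : ℕ) + (i2.val - i1.val) = i2.val by omega]; exact hieq
    · refine ⟨i2.val, i1.val - i2.val, by omega, ?_, ?_⟩
      · have := i1.isLt; omega
      · rw [show (i2.val : ℕ) + (i1.val - i2.val) = i1.val by omega]; exact hieq.symm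
  have hB0Z : B0 ≤ Z := by omega
  have hPZ : P ≤ Z := by omega
  have hPpos : 0 < P := hP1
  -- atoms
  obtain ⟨W, hW⟩ : ∃ w, C*Z = w := ⟨_, rfl⟩
  rw [hW] at hn
  obtain ⟨V, hV⟩ : ∃ v, C*P = v := ⟨_, rfl⟩
  have hVW : V ≤ W := by rw [← hV, ← hW]; exact Nat.mul_le_mul_left C hPZ
  have hW1 : 1 ≤ W := by
    rw [← hW]
    exact Nat.one_le_iff_ne_zero.mpr (Nat.mul_ne_zero (by omega) (by omega))
  obtain ⟨T1, hT1⟩ : ∃ t, C*(2*C + 3*W + 12) = t := ⟨_, rfl⟩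
  obtain ⟨T2, hT2⟩ : ∃ t, Z * C^Z = t := ⟨_, rfl⟩
  obtain ⟨T3, hT3⟩ : ∃ t, C*(Z + W + 2) = t := ⟨_, rfl⟩
  rw [hT1, hT2, hT3] at hn
  -- small d case
  by_cases hdle : d ≤ Z + W + 2
  · have hb : n ≤ C*(Z + W + 2) := le_trans hnCd (Nat.mul_le_mul_left C hdle)
    linarith
  push_neg at hdle
  -- path pigeonhole
  have hcard2 : Fintype.card (α × Fin P) < Fintype.card (Fin (C*P+1)) := by
    rw [Fintype.card_prod, Fintype.card_fin, Fintype.card_fin]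
    have : Fintype.card α * P ≤ C * P := Nat.mul_le_mul_right P hcard
    omega
  obtain ⟨w1, w2, hwne, hweq⟩ := Fintype.exists_ne_map_eq_of_card_lt
    (fun j : Fin (C*P+1) =>
      ((pX f τ a d j.val, ⟨j.val % P, Nat.mod_lt _ hPpos⟩) : α × Fin P)) hcard2
  have hwvne : w1.val ≠ w2.val := fun hh => hwne (Fin.ext hh)
  have hweq1 : pX f τ a d w1.val = pX f τ a d w2.val := congrArg Prod.fst hweq
  have hweq2 : w1.val % P = w2.val % P := by
    have := congrArg Prod.snd hweq
    simpa using congrArg Fin.val this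
  obtain ⟨j1, j2, hj12, hj2ub, hX12, hmod⟩ :
      ∃ j1 j2, j1 < j2 ∧ j2 ≤ C*P ∧ pX f τ a d j1 = pX f τ a d j2 ∧ j1 % P = j2 % P := by
    rcases Nat.lt_or_ge w1.val w2.val with h | h
    · exact ⟨w1.val, w2.val, h, by have := w2.isLt; omega, hweq1, hweq2⟩
    · exact ⟨w2.val, w1.val, by omega, by have := w1.isLt; omega, hweq1.symm, hweq2.symm⟩
  have hj2V : j2 ≤ V := by rw [← hV]; exact hj2ub
  have hdvd : P ∣ j2 - j1 := (Nat.modEq_iff_dvd' hj12.le).mp hmod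
  obtain ⟨tq, htq⟩ := hdvd
  -- ztf shift by (j2 - j1)
  have hshift : ∀ g, B0 ≤ g → ztf f τ g = ztf f τ (g + (j2 - j1)) := by
    intro g hg
    have h1 := ztf_per_mul f τ B0 P hzeq tq g hg
    rwa [show g + tq * P = g + (j2 - j1) by rw [htq]; ring] at h1
  -- path periodicity
  have hXper : ∀ i, j2 + i ≤ d - 1 - B0 → pX f τ a d (j1+i) = pX f τ a d (j2+i) := by
    intro i
    induction i with
    | zero => intro _; simpa using hX12
    | succ i ih =>
      intro hcond
      have hc' : j2 + i ≤ d - 1 - B0 := by omega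
      have hXi := ih hc'
      have hg2 : B0 ≤ d - 1 - (j2+i) := by omega
      have harr : d - 1 - (j1+i) = (d - 1 - (j2+i)) + (j2 - j1) := by omega
      have hzz : ztf f τ (d-1-(j2+i)) = ztf f τ (d-1-(j1+i)) := by
        rw [harr]; exact hshift _ hg2
      have e1 : j1 + (i+1) = (j1+i) + 1 := by omega
      have e2 : j2 + (i+1) = (j2+i) + 1 := by omega
      rw [e1, e2, pX_succ, pX_succ, hXi, ← hzz]
  -- o zero periodicity
  have hozero : ∀ i, j2 + i ≤ d - 1 - B0 →
      (oX f τ a d (j1+i) = 0 ↔ oX f τ a d (j2+i) = 0) := by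
    intro i hcond
    have hXi := hXper i hcond
    have hg2 : B0 ≤ d - 1 - (j2+i) := by omega
    have harr : d - 1 - (j1+i) = (d - 1 - (j2+i)) + (j2 - j1) := by omega
    have hzz : ztf f τ (d-1-(j2+i)) = ztf f τ (d-1-(j1+i)) := by
      rw [harr]; exact hshift _ hg2
    rw [oX_zero_iff f τ a d hf2 (j1+i), oX_zero_iff f τ a d hf2 (j2+i), hXi, ← hzz]
  -- case split
  by_cases hA : ∃ jj, jj < j2 ∧ oX f τ a d jj ≠ 0
  · obtain ⟨jj, hjlt, hone⟩ := hA
    have hjW : jj + 1 ≤ W := by omega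
    have hWd : W ≤ d := by omega
    obtain ⟨s, hs⟩ : ∃ s, d = s + W := ⟨d - W, by omega⟩
    have he1 : s ≤ d - 1 - jj := by omega
    have hjd : jj < d := by omega
    have hnlb : 2^s ≤ n :=
      le_trans (Nat.pow_le_pow_right two_pos he1)
        (le_trans (oX_lb f τ a d hf2 jj hone)
          (by rw [← hsum]
              exact Finset.single_le_sum (fun i _ => Nat.zero_le _)
                (Finset.mem_range.mpr hjd)))
    rw [hs] at hnCd
    have hnCd' : n ≤ C*(s+W) := hnCd
    have hskey : s ≤ 2*C + 2*W + 11 := by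
      by_contra hbig
      push_neg at hbig
      have hcontra := two_pow_big C W hC1 hW1 s (by omega)
      exact absurd (le_trans hnlb hnCd') (not_le.mpr hcontra)
    have hfin : n ≤ C*(2*C + 3*W + 11) := by
      calc n ≤ C*(s+W) := hnCd'
      _ ≤ C*((2*C+2*W+11)+W) := Nat.mul_le_mul_left _ (Nat.add_le_add_right hskey _)
      _ = C*(2*C+3*W+11) := by ring
    have hstep : n ≤ T1 := by
      rw [← hT1]
      exact le_trans hfin (Nat.mul_le_mul_left _ (by omega))
    omega
  · push_neg at hA
    have hzero : ∀ jj, jj ≤ d - 1 - B0 → oX f τ a d jj = 0 := by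
      intro jj
      induction jj using Nat.strong_induction_on with
      | _ jj ih =>
        intro hjj
        by_cases hlt : jj < j2
        · exact hA jj hlt
        · push_neg at hlt
          have hcond : j2 + (jj - j2) ≤ d - 1 - B0 := by omega
          have h0' : oX f τ a d (j1 + (jj - j2)) = 0 := ih _ (by omega) (by omega)
          have hiff := (hozero (jj - j2) hcond).mp h0'
          rwa [show j2 + (jj - j2) = jj by omega] at hiff
    have hd' : d = (d - B0) + B0 := by omega
    have hsum2 := sum_shift (oX f τ a d) (d - B0) B0
    rw [← hd'] at hsum2
    have hfirst : ∑ i ∈ Finset.range (d-B0), oX f τ a d i = 0 :=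
      Finset.sum_eq_zero (fun i hi => hzero i (by
        have := Finset.mem_range.mp hi; omega))
    have hlast : ∑ i ∈ Finset.range B0, oX f τ a d ((d-B0)+i) ≤ B0 * C^Z := by
      calc ∑ i ∈ Finset.range B0, oX f τ a d ((d-B0)+i)
          ≤ (Finset.range B0).card • C^Z := by
            refine Finset.sum_le_card_nsmul _ _ _ ?_
            intro i hi
            have hi' := Finset.mem_range.mp hi
            refine le_trans (oX_ub f τ a d C hC1 hfC _ (by omega)) ?_
            exact Nat.pow_le_pow_right hC1 (by omega)
        _ = B0 * C^Z := by simp [smul_eq_mul]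
    have hnB : n ≤ Z * C^Z := by
      have h1 : n ≤ B0 * C^Z := by omega
      exact le_trans h1 (Nat.mul_le_mul_right _ hB0Z)
    have hnB' : n ≤ T2 := by rw [← hT2]; exact hnB
    omega
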